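/- Let Q: ℝ → ℝ be a continuous function satisfying Q(t) ≥ (1+δ) log(1+t²) for some δ > 0 and all |t| large enough. Then there is a constant C > 0 such that for all t ∈ ℝ and all N: ρ_{N,Q}^1(t) ≤ e^{CN} e^{−N [ Q(t) − log(1+t²) ]}. -/

import Mathlib

open MeasureTheory Real Filter

/-- Squared Vandermonde interaction `∏_{i<j} (x_i - x_j)²`. -/
noncomputable def pairProd (N : ℕ) (x : Fin N → ℝ) : ℝ :=
  ∏ i : Fin N, ∏ j ∈ Finset.Ioi i, (x i - x j) ^ 2

/-- Unnormalized density of the ensemble `P_{N,Q}`. -/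
noncomputable def densQ (N : ℕ) (Q : ℝ → ℝ) (x : Fin N → ℝ) : ℝ :=
  pairProd N x * Real.exp (-(N : ℝ) * ∑ j, Q (x j))

/-- Normalized density of the ensemble `P_{N,Q}`. -/
noncomputable def PQ (N : ℕ) (Q : ℝ → ℝ) (x : Fin N → ℝ) : ℝ :=
  densQ N Q x / ∫ y : Fin N → ℝ, densQ N Q y

/-- `k`-th correlation function of a density `P` on `ℝ^N`. -/
noncomputable def corr (N k : ℕ) (P : (Fin N → ℝ) → ℝ) (t : Fin k → ℝ) : ℝ :=
  if hk : k ≤ N then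
    ∫ y : Fin (N - k) → ℝ,
      P (fun i => if hi : (i : ℕ) < k then t ⟨(i : ℕ), hi⟩
          else y ⟨(i : ℕ) - k, by have := i.isLt; omega⟩)
  else 0

/-- First correlation function `ρ¹_{N,Q}`. -/
noncomputable def rho1 (N : ℕ) (Q : ℝ → ℝ) (t : ℝ) : ℝ :=
  corr N 1 (PQ N Q) (fun _ => t)

/-! ### Auxiliary lemmas -/

lemma pairProd_nonneg (N : ℕ) (x : Fin N → ℝ) : 0 ≤ pairProd N x := by
  unfold pairProd
  exact Finset.prod_nonneg fun i _ => Finset.prod_nonneg fun j _ => sq_nonneg _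

lemma densQ_nonneg (N : ℕ) (Q : ℝ → ℝ) (x : Fin N → ℝ) : 0 ≤ densQ N Q x :=
  mul_nonneg (pairProd_nonneg N x) (Real.exp_nonneg _)

lemma densQ_continuous (N : ℕ) (Q : ℝ → ℝ) (hQ : Continuous Q) :
    Continuous (densQ N Q) := by
  unfold densQ pairProd
  apply Continuous.mul
  · exact continuous_finset_prod _ fun i _ =>
      continuous_finset_prod _ fun j _ => ((continuous_apply i).sub (continuous_apply j)).pow 2
  · exact (Real.continuous_exp.comp
      ((continuous_const.mul (continuous_finset_sum _ fun j _ => hQ.comp (continuous_apply j)))))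

lemma continuous_consMap (n : ℕ) :
    Continuous (fun p : ℝ × (Fin n → ℝ) => (Fin.cons p.1 p.2 : Fin (n + 1) → ℝ)) := by
  apply continuous_pi
  intro i
  refine Fin.cases ?_ ?_ i
  · simpa using continuous_fst
  · intro j
    have h : Continuous fun a : ℝ × (Fin n → ℝ) => a.2 j := (continuous_apply j).comp continuous_snd
    simpa using h

lemma pairProd_cons (n : ℕ) (t : ℝ) (y : Fin n → ℝ) :
    pairProd (n + 1) (Fin.cons t y) = (∏ j, (t - y j) ^ 2) * pairProd n y := by
  unfold pairProd
  rw [Fin.prod_univ_succ]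
  congr 1
  · rw [Fin.prod_Ioi_zero]
    simp
  · refine Finset.prod_congr rfl fun k _ => ?_
    rw [Fin.prod_Ioi_succ]
    simp

lemma densQ_cons (n : ℕ) (Q : ℝ → ℝ) (t : ℝ) (y : Fin n → ℝ) :
    densQ (n + 1) Q (Fin.cons t y) =
      (∏ j, (t - y j) ^ 2) * Real.exp (-((n : ℝ) + 1) * Q t) *
        (pairProd n y * Real.exp (-((n : ℝ) + 1) * ∑ j, Q (y j))) := by
  unfold densQ
  rw [pairProd_cons]
  have hsum : ∑ i : Fin (n+1), Q ((Fin.cons t y : Fin (n+1) → ℝ) i) = Q t + ∑ j, Q (y j) := by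
    rw [Fin.sum_univ_succ]
    simp
  rw [hsum]
  rw [show -((n + 1 : ℕ) : ℝ) * (Q t + ∑ j, Q (y j)) =
    (-((n : ℝ) + 1) * Q t) + (-((n : ℝ) + 1) * ∑ j, Q (y j)) by push_cast; ring]
  rw [Real.exp_add]
  ring

/-- `log x ≥ -2/√x` for `x ≥ 0` (with Lean's conventions at `0`). -/
lemma neg_two_div_sqrt_le_log {x : ℝ} (hx : 0 ≤ x) : -(2 / Real.sqrt x) ≤ Real.log x := by
  rcases eq_or_lt_of_le hx with h | h
  · simp [← h]
  · have hs : 0 < Real.sqrt x := Real.sqrt_pos.2 h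
    have h1 : Real.log (Real.sqrt x)⁻¹ ≤ (Real.sqrt x)⁻¹ - 1 :=
      Real.log_le_sub_one_of_pos (by positivity)
    have h2 : Real.log (Real.sqrt x) = Real.log x / 2 := Real.log_sqrt hx
    rw [Real.log_inv] at h1
    have h3 : 1 - (Real.sqrt x)⁻¹ ≤ Real.log x / 2 := by linarith
    have h4 : -(2 / Real.sqrt x) ≤ 2 - 2 * (Real.sqrt x)⁻¹ := by
      rw [div_eq_mul_inv]; linarith
    linarith

/-- The comparison function `u ↦ 2/√|u|` is interval integrable on `[-3,3]`
and its integral is at most `14`. -/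
lemma sqrtComp_eq_on {u : ℝ} (hu : u ∈ Set.Icc (0:ℝ) 3) :
    2 / Real.sqrt |u| = 2 * u ^ (-(1/2) : ℝ) := by
  rcases eq_or_lt_of_le hu.1 with h | h
  · rw [← h]
    norm_num
  · rw [abs_of_pos h, Real.sqrt_eq_rpow, Real.rpow_neg h.le, div_eq_mul_inv]

lemma sqrtComp_int03 :
    IntervalIntegrable (fun u : ℝ => 2 / Real.sqrt |u|) volume 0 3 := by
  have hr : IntervalIntegrable (fun x : ℝ => 2 * x ^ (-(1/2) : ℝ)) volume 0 3 :=
    (intervalIntegral.intervalIntegrable_rpow' (by norm_num)).const_mul 2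
  rw [intervalIntegrable_iff] at hr ⊢
  refine hr.congr_fun ?_ measurableSet_uIoc
  intro u hu
  rw [Set.uIoc_of_le (by norm_num : (0:ℝ) ≤ 3)] at hu
  exact (sqrtComp_eq_on ⟨hu.1.le, hu.2⟩).symm

open intervalIntegral in
lemma sqrtComp_val03 : (∫ u in (0:ℝ)..3, 2 / Real.sqrt |u|) = 4 * Real.sqrt 3 := by
  have h1 : (∫ u in (0:ℝ)..3, 2 / Real.sqrt |u|) = ∫ u in (0:ℝ)..3, 2 * u ^ (-(1/2) : ℝ) := by
    refine intervalIntegral.integral_congr ?_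
    intro u hu
    rw [Set.uIcc_of_le (by norm_num : (0:ℝ) ≤ 3)] at hu
    exact sqrtComp_eq_on hu
  rw [h1, intervalIntegral.integral_const_mul, integral_rpow (Or.inl (by norm_num))]
  have h0 : ((0:ℝ)) ^ ((-(1/2) : ℝ) + 1) = 0 := by
    rw [Real.zero_rpow (by norm_num)]
  rw [h0]
  have h3 : ((3:ℝ)) ^ ((-(1/2) : ℝ) + 1) = Real.sqrt 3 := by
    rw [show (-(1/2) : ℝ) + 1 = 1/2 by norm_num, ← Real.sqrt_eq_rpow]
  rw [h3]
  ring

lemma sqrtComp_integrable :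
    IntervalIntegrable (fun u : ℝ => 2 / Real.sqrt |u|) volume (-3) 3 ∧
      (∫ u in (-3:ℝ)..3, 2 / Real.sqrt |u|) ≤ 14 := by
  have h03 := sqrtComp_int03
  have hneg : IntervalIntegrable (fun u : ℝ => 2 / Real.sqrt |u|) volume (-3) 0 := by
    have := ((IntervalIntegrable.iff_comp_neg (f := fun u : ℝ => 2 / Real.sqrt |u|) (a := 0) (b := 3)).mp h03)
    simp only [abs_neg, neg_zero] at this
    exact this.symm
  have htot := hneg.trans h03
  refine ⟨htot, ?_⟩
  have hval_neg : (∫ u in (-3:ℝ)..0, 2 / Real.sqrt |u|) = ∫ u in (0:ℝ)..3, 2 / Real.sqrt |u| := by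
    have := intervalIntegral.integral_comp_neg (a := (0:ℝ)) (b := 3)
      (fun u : ℝ => 2 / Real.sqrt |u|)
    simp only [abs_neg, neg_zero] at this
    exact this.symm
  have hadd := intervalIntegral.integral_add_adjacent_intervals hneg h03
    (f := fun u : ℝ => 2 / Real.sqrt |u|)
  rw [← hadd, hval_neg, sqrtComp_val03]
  nlinarith [Real.sq_sqrt (show (0:ℝ) ≤ 3 by norm_num), Real.sqrt_nonneg 3]

/-- Integrability of `log |· - y|` on `[0,1]` together with the key lower bound. -/
lemma log_abs_bound {u : ℝ} (hu : |u| ≤ 3) : ‖Real.log |u|‖ ≤ ‖3 + 2 / Real.sqrt |u|‖ := by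
  have hb0 : (0:ℝ) ≤ 2 / Real.sqrt |u| := by positivity
  rw [Real.norm_eq_abs, Real.norm_eq_abs, abs_of_nonneg (by linarith : (0:ℝ) ≤ 3 + 2 / Real.sqrt |u|)]
  rw [abs_le]
  constructor
  · have := neg_two_div_sqrt_le_log (abs_nonneg u)
    linarith
  · rcases eq_or_ne u 0 with rfl | hne
    · norm_num
    · have := Real.log_le_sub_one_of_pos (abs_pos.mpr hne)
      linarith

lemma log_shift_intervalIntegrable {y : ℝ} (hy : |y| ≤ 2) :
    IntervalIntegrable (fun u : ℝ => Real.log |u|) volume (0 - y) (1 - y) := by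
  obtain ⟨hg, -⟩ := sqrtComp_integrable
  have hb : IntervalIntegrable (fun u : ℝ => 3 + 2 / Real.sqrt |u|) volume (-3) 3 :=
    (intervalIntegrable_const).add hg
  have habs := abs_le.mp hy
  have hFlog : IntervalIntegrable (fun u : ℝ => Real.log |u|) volume (-3) 3 := by
    refine hb.mono_fun ((Real.measurable_log.comp measurable_abs).aestronglyMeasurable) ?_
    refine (ae_restrict_iff' measurableSet_uIoc).mpr (ae_of_all _ fun u hu => ?_)
    rw [Set.uIoc_of_le (by norm_num : (-3:ℝ) ≤ 3)] at hu
    exact log_abs_bound (abs_le.mpr ⟨hu.1.le, hu.2⟩)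
  refine hFlog.mono_set ?_
  rw [Set.uIcc_of_le (by linarith : (0:ℝ) - y ≤ 1 - y), Set.uIcc_of_le (by norm_num : (-3:ℝ) ≤ 3)]
  exact Set.Icc_subset_Icc (by linarith) (by linarith)

/-- Integrability of `log |· - y|` on `[0,1]` together with the key lower bound. -/
lemma point_lemma (y : ℝ) :
    IntegrableOn (fun s => Real.log |s - y|) (Set.Icc (0:ℝ) 1) volume ∧
      (1 / 2) * Real.log (1 + y ^ 2) - 16 ≤ ∫ s in Set.Icc (0:ℝ) 1, Real.log |s - y| := by
  by_cases hy : |y| ≤ 2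
  · -- near case
    obtain ⟨hg, hgval⟩ := sqrtComp_integrable
    have habs := abs_le.mp hy
    have hF' : IntervalIntegrable (fun u : ℝ => Real.log |u|) volume (0 - y) (1 - y) :=
      log_shift_intervalIntegrable hy
    have hFy : IntervalIntegrable (fun s : ℝ => Real.log |s - y|) volume 0 1 := by
      have := hF'.comp_sub_right y
      simpa using this
    have hIccInt : IntegrableOn (fun s => Real.log |s - y|) (Set.Icc (0:ℝ) 1) volume := by
      rw [integrableOn_Icc_iff_integrableOn_Ioc]
      have := hFy
      rw [intervalIntegrable_iff, Set.uIoc_of_le (by norm_num : (0:ℝ) ≤ 1)] at this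
      exact this
    refine ⟨hIccInt, ?_⟩
    have hIcc : ∫ s in Set.Icc (0:ℝ) 1, Real.log |s - y| = ∫ s in (0:ℝ)..1, Real.log |s - y| := by
      rw [intervalIntegral.integral_of_le (by norm_num : (0:ℝ) ≤ 1),
        ← integral_Icc_eq_integral_Ioc]
    have hshift : ∫ s in (0:ℝ)..1, Real.log |s - y| = ∫ u in (0 - y)..(1 - y), Real.log |u| := by
      rw [← intervalIntegral.integral_comp_sub_right (fun u => Real.log |u|) y]
    have hgsub : IntervalIntegrable (fun u : ℝ => 2 / Real.sqrt |u|) volume (0 - y) (1 - y) := by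
      refine hg.mono_set ?_
      rw [Set.uIcc_of_le (by linarith : (0:ℝ) - y ≤ 1 - y),
        Set.uIcc_of_le (by norm_num : (-3:ℝ) ≤ 3)]
      exact Set.Icc_subset_Icc (by linarith) (by linarith)
    have hmin : ∫ u in (0 - y)..(1 - y), -(2 / Real.sqrt |u|) ≤
        ∫ u in (0 - y)..(1 - y), Real.log |u| := by
      refine intervalIntegral.integral_mono_on (by linarith) hgsub.neg hF' fun u _ => ?_
      exact neg_two_div_sqrt_le_log (abs_nonneg u)
    have hsub : ∫ u in (0 - y)..(1 - y), 2 / Real.sqrt |u| ≤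
        ∫ u in (-3:ℝ)..3, 2 / Real.sqrt |u| := by
      refine intervalIntegral.integral_mono_interval (by linarith) (by linarith) (by linarith)
        (ae_of_all _ fun u => by positivity) hg
    have hneg : (-14 : ℝ) ≤ ∫ u in (0 - y)..(1 - y), Real.log |u| := by
      rw [intervalIntegral.integral_neg] at hmin
      linarith
    have hlog5 : Real.log (1 + y ^ 2) ≤ 4 := by
      have h1 : Real.log (1 + y ^ 2) ≤ (1 + y ^ 2) - 1 :=
        Real.log_le_sub_one_of_pos (by positivity)
      nlinarith
    rw [hIcc, hshift]
    linarith
  · -- far case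
    push_neg at hy
    have hbig : ∀ s ∈ Set.Icc (0:ℝ) 1, |y| - 1 ≤ |s - y| := by
      intro s hs
      have h1 : |y| - |s| ≤ |y - s| := abs_sub_abs_le_abs_sub y s
      have h2 : |y - s| = |s - y| := abs_sub_comm y s
      have h3 : |s| ≤ 1 := abs_le.mpr ⟨by linarith [hs.1], hs.2⟩
      linarith
    have hcont : ContinuousOn (fun s => Real.log |s - y|) (Set.Icc (0:ℝ) 1) := by
      apply ContinuousOn.log
      · exact ((continuous_id.sub continuous_const).abs).continuousOn
      · intro s hs
        have := hbig s hs
        intro h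
        rw [h] at this
        linarith
    have hint : IntegrableOn (fun s => Real.log |s - y|) (Set.Icc (0:ℝ) 1) volume :=
      hcont.integrableOn_Icc
    refine ⟨hint, ?_⟩
    have hmono : ∫ s in Set.Icc (0:ℝ) 1, Real.log (|y| - 1) ≤
        ∫ s in Set.Icc (0:ℝ) 1, Real.log |s - y| := by
      refine setIntegral_mono_on (integrableOn_const (by simp)) hint
        measurableSet_Icc fun s hs => ?_
      exact Real.log_le_log (by linarith) (hbig s hs)
    have hconst : ∫ _s in Set.Icc (0:ℝ) 1, Real.log (|y| - 1) = Real.log (|y| - 1) := by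
      rw [setIntegral_const]
      simp [Real.volume_Icc]
    have hy2 : y ^ 2 = |y| ^ 2 := (sq_abs y).symm
    have hkey : Real.log (1 + y ^ 2) ≤ Real.log 5 + 2 * Real.log (|y| - 1) := by
      have h5 : 1 + y ^ 2 ≤ 5 * (|y| - 1) ^ 2 := by nlinarith
      have hpos : (0:ℝ) < (|y| - 1) ^ 2 := by nlinarith
      calc Real.log (1 + y ^ 2) ≤ Real.log (5 * (|y| - 1) ^ 2) :=
            Real.log_le_log (by positivity) h5
        _ = Real.log 5 + Real.log ((|y| - 1) ^ 2) := Real.log_mul (by norm_num) (by positivity)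
        _ = Real.log 5 + 2 * Real.log (|y| - 1) := by
            rw [Real.log_pow]
            norm_num
    have hlog5 : Real.log 5 ≤ 4 := by
      have := Real.log_le_sub_one_of_pos (show (0:ℝ) < 5 by norm_num)
      linarith
    rw [hconst] at hmono
    linarith

/-- Jensen's inequality core bound. -/
lemma jensen_core (n : ℕ) (y : Fin n → ℝ) :
    (∏ j, (1 + (y j) ^ 2)) ≤
      Real.exp (32 * n) * ∫ s in Set.Icc (0:ℝ) 1, ∏ j, (s - y j) ^ 2 := by
  set μ := volume.restrict (Set.Icc (0:ℝ) 1) with hμ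
  haveI : IsProbabilityMeasure μ := by
    constructor
    rw [hμ, Measure.restrict_apply_univ, Real.volume_Icc]
    norm_num
  set f : ℝ → ℝ := fun s => ∑ j, 2 * Real.log |s - y j| with hf
  have hptint : ∀ j : Fin n, Integrable (fun s => 2 * Real.log |s - y j|) μ := fun j =>
    ((point_lemma (y j)).1.const_mul 2)
  have hfi : Integrable f μ := integrable_finset_sum _ fun j _ => hptint j
  have hGcont : Continuous (fun s : ℝ => ∏ j, (s - y j) ^ 2) :=
    continuous_finset_prod _ fun j _ => ((continuous_id.sub continuous_const).pow 2)
  have hGint : Integrable (fun s : ℝ => ∏ j, (s - y j) ^ 2) μ :=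
    hGcont.continuousOn.integrableOn_Icc
  have hae : ∀ᵐ s ∂μ, Real.exp (f s) = ∏ j, (s - y j) ^ 2 := by
    have h0 : ∀ᵐ s : ℝ ∂volume, ∀ j, s ≠ y j := by
      rw [ae_all_iff]
      intro j
      rw [ae_iff]
      have hset : {a : ℝ | ¬a ≠ y j} = {y j} := by ext s; simp
      rw [hset, Real.volume_singleton]
    refine ae_restrict_of_ae ?_
    filter_upwards [h0] with s hs
    rw [hf]
    rw [Real.exp_sum]
    refine Finset.prod_congr rfl fun j _ => ?_
    have hne : s - y j ≠ 0 := sub_ne_zero.mpr (hs j)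
    have habs : (0:ℝ) < |s - y j| := abs_pos.mpr hne
    rw [show 2 * Real.log |s - y j| = Real.log (|s - y j| ^ 2) by
        rw [Real.log_pow]; norm_num,
      Real.exp_log (by positivity), sq_abs]
  have hgi : Integrable (Real.exp ∘ f) μ := by
    refine hGint.congr ?_
    filter_upwards [hae] with s hs using hs.symm
  have hjen : Real.exp (∫ s, f s ∂μ) ≤ ∫ s, Real.exp (f s) ∂μ :=
    convexOn_exp.map_integral_le Real.continuous_exp.continuousOn isClosed_univ
      (ae_of_all _ fun _ => Set.mem_univ _) hfi hgi
  have hint_eq : ∫ s, Real.exp (f s) ∂μ = ∫ s, ∏ j, (s - y j) ^ 2 ∂μ :=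
    integral_congr_ae hae
  have hsum : ∫ s, f s ∂μ = ∑ j, 2 * ∫ s, Real.log |s - y j| ∂μ := by
    rw [hf, integral_finset_sum _ fun j _ => hptint j]
    exact Finset.sum_congr rfl fun j _ => integral_const_mul _ _
  have hlower : ∑ j, Real.log (1 + (y j) ^ 2) - 32 * n ≤ ∫ s, f s ∂μ := by
    rw [hsum]
    have hpt : ∀ j : Fin n, Real.log (1 + (y j) ^ 2) - 32 ≤
        2 * ∫ s, Real.log |s - y j| ∂μ := fun j => by
      have := (point_lemma (y j)).2
      linarith
    calc ∑ j, Real.log (1 + (y j) ^ 2) - 32 * n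
        = ∑ j : Fin n, (Real.log (1 + (y j) ^ 2) - 32) := by
          rw [Finset.sum_sub_distrib, Finset.sum_const, Finset.card_univ, Fintype.card_fin]
          push_cast
          ring
      _ ≤ _ := Finset.sum_le_sum fun j _ => hpt j
  have hprod : (∏ j, (1 + (y j) ^ 2)) = Real.exp (∑ j, Real.log (1 + (y j) ^ 2)) := by
    rw [Real.exp_sum]
    exact Finset.prod_congr rfl fun j _ => (Real.exp_log (by positivity)).symm
  calc ∏ j, (1 + (y j) ^ 2)
      = Real.exp (32 * n) * Real.exp (∑ j, Real.log (1 + (y j) ^ 2) - 32 * n) := by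
        rw [← Real.exp_add, hprod]
        congr 1
        ring
    _ ≤ Real.exp (32 * n) * Real.exp (∫ s, f s ∂μ) :=
        mul_le_mul_of_nonneg_left (Real.exp_le_exp.mpr hlower) (Real.exp_nonneg _)
    _ ≤ Real.exp (32 * n) * ∫ s, ∏ j, (s - y j) ^ 2 ∂μ := by
        rw [← hint_eq]
        exact mul_le_mul_of_nonneg_left hjen (Real.exp_nonneg _)

/-- Key pointwise comparison. -/
lemma key_pointwise (Q : ℝ → ℝ) (hQcont : Continuous Q) (n : ℕ) (B : ℝ)
    (hB : ∀ s ∈ Set.Icc (0:ℝ) 1, Q s ≤ B) (t : ℝ) (y : Fin n → ℝ) :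
    densQ (n + 1) Q (Fin.cons t y) ≤
      (Real.exp ((Real.log 2 + 33 + max B 0) * ((n : ℝ) + 1)) *
        Real.exp (-((n : ℝ) + 1) * (Q t - Real.log (1 + t ^ 2)))) *
        ∫ s in Set.Icc (0:ℝ) 1, densQ (n + 1) Q (Fin.cons s y) := by
  have hNpos : (0:ℝ) < (n : ℝ) + 1 := by positivity
  set N : ℝ := (n : ℝ) + 1 with hN
  set G : ℝ → ℝ := fun s => ∏ j, (s - y j) ^ 2 with hG
  set W : ℝ := pairProd n y * Real.exp (-N * ∑ j, Q (y j)) with hW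
  have hWnn : 0 ≤ W := mul_nonneg (pairProd_nonneg n y) (Real.exp_nonneg _)
  have hD : ∀ s, densQ (n + 1) Q (Fin.cons s y) = G s * Real.exp (-N * Q s) * W :=
    fun s => densQ_cons n Q s y
  have hGcont : Continuous G :=
    continuous_finset_prod _ fun j _ => ((continuous_id.sub continuous_const).pow 2)
  have hGe_cont : Continuous (fun s => G s * Real.exp (-N * Q s)) :=
    hGcont.mul (Real.continuous_exp.comp (continuous_const.mul hQcont))
  have hGnn : ∀ s, 0 ≤ G s := fun s => Finset.prod_nonneg fun j _ => sq_nonneg _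
  have hID : ∫ s in Set.Icc (0:ℝ) 1, densQ (n + 1) Q (Fin.cons s y) =
      (∫ s in Set.Icc (0:ℝ) 1, G s * Real.exp (-N * Q s)) * W := by
    simp_rw [hD]
    rw [integral_mul_const]
  have hDint_nn : 0 ≤ ∫ s in Set.Icc (0:ℝ) 1, densQ (n + 1) Q (Fin.cons s y) :=
    integral_nonneg fun s => densQ_nonneg _ _ _
  have hJnn : 0 ≤ ∫ s in Set.Icc (0:ℝ) 1, G s :=
    integral_nonneg fun s => hGnn s
  have hcomp : Real.exp (-N * max B 0) * ∫ s in Set.Icc (0:ℝ) 1, G s ≤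
      ∫ s in Set.Icc (0:ℝ) 1, G s * Real.exp (-N * Q s) := by
    rw [← integral_const_mul]
    refine setIntegral_mono_on
      ((hGcont.continuousOn.integrableOn_Icc).const_mul _)
      (hGe_cont.continuousOn.integrableOn_Icc) measurableSet_Icc fun s hs => ?_
    have h2 : Q s ≤ max B 0 := le_trans (hB s hs) (le_max_left _ _)
    have h3 : Real.exp (-N * max B 0) ≤ Real.exp (-N * Q s) :=
      Real.exp_le_exp.mpr (by nlinarith)
    calc Real.exp (-N * max B 0) * G s = G s * Real.exp (-N * max B 0) := mul_comm _ _
      _ ≤ G s * Real.exp (-N * Q s) := mul_le_mul_of_nonneg_left h3 (hGnn s)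
  have h5 : (∫ s in Set.Icc (0:ℝ) 1, G s) ≤
      Real.exp (N * max B 0) * ∫ s in Set.Icc (0:ℝ) 1, G s * Real.exp (-N * Q s) := by
    have h6 := mul_le_mul_of_nonneg_left hcomp (Real.exp_nonneg (N * max B 0))
    rw [← mul_assoc, ← Real.exp_add, show N * max B 0 + -N * max B 0 = 0 by ring,
      Real.exp_zero, one_mul] at h6
    exact h6
  have hG2 : G t ≤ 2 ^ n * (1 + t ^ 2) ^ n * ∏ j, (1 + (y j) ^ 2) := by
    have h1 : ∀ j : Fin n, (t - y j) ^ 2 ≤ 2 * (1 + t ^ 2) * (1 + (y j) ^ 2) := fun j => by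
      nlinarith [sq_nonneg (t + y j), sq_nonneg (t * y j), sq_nonneg (t * y j - 1)]
    calc G t ≤ ∏ j, (2 * (1 + t ^ 2) * (1 + (y j) ^ 2)) :=
          Finset.prod_le_prod (fun j _ => sq_nonneg _) (fun j _ => h1 j)
      _ = 2 ^ n * (1 + t ^ 2) ^ n * ∏ j, (1 + (y j) ^ 2) := by
          rw [Finset.prod_mul_distrib, Finset.prod_mul_distrib, Finset.prod_const,
            Finset.prod_const, Finset.card_univ, Fintype.card_fin]
  have hGt : G t ≤ 2 ^ n * (1 + t ^ 2) ^ n *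
      (Real.exp (32 * n) * ∫ s in Set.Icc (0:ℝ) 1, G s) :=
    le_trans hG2 (mul_le_mul_of_nonneg_left (jensen_core n y) (by positivity))
  calc densQ (n + 1) Q (Fin.cons t y)
      = G t * Real.exp (-N * Q t) * W := hD t
    _ ≤ (2 ^ n * (1 + t ^ 2) ^ n * (Real.exp (32 * n) * ∫ s in Set.Icc (0:ℝ) 1, G s)) *
          Real.exp (-N * Q t) * W :=
        mul_le_mul_of_nonneg_right
          (mul_le_mul_of_nonneg_right hGt (Real.exp_nonneg _)) hWnn
    _ = (2 ^ n * (1 + t ^ 2) ^ n * Real.exp (32 * (n : ℝ)) * Real.exp (-N * Q t)) *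
          ((∫ s in Set.Icc (0:ℝ) 1, G s) * W) := by ring
    _ ≤ (2 ^ n * (1 + t ^ 2) ^ n * Real.exp (32 * (n : ℝ)) * Real.exp (-N * Q t)) *
          (Real.exp (N * max B 0) *
            ((∫ s in Set.Icc (0:ℝ) 1, G s * Real.exp (-N * Q s)) * W)) := by
        have h7 : (∫ s in Set.Icc (0:ℝ) 1, G s) * W ≤
            Real.exp (N * max B 0) *
              ((∫ s in Set.Icc (0:ℝ) 1, G s * Real.exp (-N * Q s)) * W) :=
          le_of_le_of_eq (mul_le_mul_of_nonneg_right h5 hWnn) (mul_assoc _ _ _)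
        exact mul_le_mul_of_nonneg_left h7 (by positivity)
    _ = (2 ^ n * (1 + t ^ 2) ^ n * Real.exp (32 * (n : ℝ)) * Real.exp (N * max B 0) *
          Real.exp (-N * Q t)) * ∫ s in Set.Icc (0:ℝ) 1, densQ (n + 1) Q (Fin.cons s y) := by
        rw [hID]
        ring
    _ ≤ (Real.exp ((Real.log 2 + 33 + max B 0) * N) *
          Real.exp (-N * (Q t - Real.log (1 + t ^ 2)))) *
          ∫ s in Set.Icc (0:ℝ) 1, densQ (n + 1) Q (Fin.cons s y) := by
        refine mul_le_mul_of_nonneg_right ?_ hDint_nn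
        have e2 : (2:ℝ) ^ n = Real.exp ((n : ℝ) * Real.log 2) := by
          rw [Real.exp_nat_mul, Real.exp_log two_pos]
        have e3 : (1 + t ^ 2) ^ n = Real.exp ((n : ℝ) * Real.log (1 + t ^ 2)) := by
          rw [Real.exp_nat_mul, Real.exp_log (by positivity)]
        rw [e2, e3]
        simp only [← Real.exp_add]
        apply Real.exp_le_exp.mpr
        have hl2 : 0 ≤ Real.log 2 := Real.log_nonneg one_le_two
        have hlt : 0 ≤ Real.log (1 + t ^ 2) := Real.log_nonneg (by nlinarith [sq_nonneg t])
        have hm : 0 ≤ max B 0 := le_max_right _ _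
        have hn : (n : ℝ) ≤ N := by rw [hN]; linarith
        have e4 : (n : ℝ) * Real.log 2 ≤ N * Real.log 2 :=
          mul_le_mul_of_nonneg_right hn hl2
        have e5 : (n : ℝ) * Real.log (1 + t ^ 2) ≤ N * Real.log (1 + t ^ 2) :=
          mul_le_mul_of_nonneg_right hn hlt
        nlinarith [hNpos, hn, hm, e4, e5]

lemma corr_one (n : ℕ) (P : (Fin (n + 1) → ℝ) → ℝ) (t : ℝ) :
    corr (n + 1) 1 P (fun _ => t) = ∫ y : Fin n → ℝ, P (Fin.cons t y) := by
  unfold corr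
  rw [dif_pos (by omega : 1 ≤ n + 1)]
  refine integral_congr_ae (ae_of_all _ fun y => ?_)
  refine congrArg P (funext fun i => ?_)
  refine Fin.cases ?_ (fun j => ?_) i
  · simp
  · simp

/-- If `Q` is continuous and `Q(t) ≥ (1+δ) log(1+t²)` for large `|t|`,
then `ρ¹_{N,Q}(t) ≤ e^{CN} e^{−N[Q(t) − log(1+t²)]}` for all `t` and `N`. -/
theorem statement_14 (Q : ℝ → ℝ)
    (hQcont : Continuous Q)
    (hgrowth : ∃ δ : ℝ, 0 < δ ∧ ∃ T : ℝ, ∀ t : ℝ, T ≤ |t| →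
      (1 + δ) * Real.log (1 + t ^ 2) ≤ Q t) :
    ∃ C : ℝ, 0 < C ∧ ∀ N : ℕ, 1 ≤ N → ∀ t : ℝ,
      rho1 N Q t ≤ Real.exp (C * N) *
        Real.exp (-(N : ℝ) * (Q t - Real.log (1 + t ^ 2))) := by
  clear hgrowth
  obtain ⟨s₀, hs₀mem, hs₀⟩ := isCompact_Icc.exists_isMaxOn
    (⟨0, by norm_num⟩ : (Set.Icc (0:ℝ) 1).Nonempty) hQcont.continuousOn
  set B := Q s₀ with hBdef
  have hB : ∀ s ∈ Set.Icc (0:ℝ) 1, Q s ≤ B := fun s hs => hs₀ hs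
  refine ⟨Real.log 2 + 33 + max B 0, ?_, ?_⟩
  · have h2 : 0 < Real.log 2 := Real.log_pos (by norm_num)
    have h3 : (0:ℝ) ≤ max B 0 := le_max_right _ _
    linarith
  intro N hN t
  obtain ⟨n, rfl⟩ : ∃ n, N = n + 1 := ⟨N - 1, by omega⟩
  unfold rho1
  rw [corr_one n _ t]
  by_cases hZ : (∫ x : Fin (n + 1) → ℝ, densQ (n + 1) Q x) = 0
  · have hzero : ∀ y : Fin n → ℝ, PQ (n + 1) Q (Fin.cons t y) = 0 := fun y => by
      unfold PQ
      rw [hZ, div_zero]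
    simp only [hzero]
    rw [integral_zero]
    positivity
  · have hint : Integrable (densQ (n + 1) Q) (volume : Measure (Fin (n + 1) → ℝ)) := by
      by_contra h
      exact hZ (integral_undef h)
    have hZpos : 0 < ∫ x : Fin (n + 1) → ℝ, densQ (n + 1) Q x :=
      lt_of_le_of_ne (integral_nonneg fun x => densQ_nonneg _ _ _) (Ne.symm hZ)
    unfold PQ
    rw [integral_div, div_le_iff₀ hZpos]
    push_cast
    set A := Real.exp ((Real.log 2 + 33 + max B 0) * ((n : ℝ) + 1)) *
      Real.exp (-((n : ℝ) + 1) * (Q t - Real.log (1 + t ^ 2))) with hAdef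
    have hAnn : (0:ℝ) ≤ A := by positivity
    have hkey : ∀ y : Fin n → ℝ, densQ (n + 1) Q (Fin.cons t y) ≤
        A * ∫ s in Set.Icc (0:ℝ) 1, densQ (n + 1) Q (Fin.cons s y) := fun y =>
      key_pointwise Q hQcont n B hB t y
    have hcons_cont : Continuous
        (fun p : ℝ × (Fin n → ℝ) => densQ (n + 1) Q (Fin.cons p.1 p.2)) :=
      (densQ_continuous (n + 1) Q hQcont).comp (continuous_consMap n)
    have hmeas1 : AEStronglyMeasurable
        (fun y : Fin n → ℝ => densQ (n + 1) Q (Fin.cons t y)) volume :=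
      (hcons_cont.comp (continuous_const.prodMk continuous_id)).aestronglyMeasurable
    have hIccInt : ∀ y : Fin n → ℝ, IntegrableOn
        (fun s => densQ (n + 1) Q (Fin.cons s y)) (Set.Icc (0:ℝ) 1) volume := fun y =>
      ((hcons_cont.comp (continuous_id.prodMk continuous_const)).continuousOn).integrableOn_Icc
    have hmeasp : Measurable (fun p : (Fin n → ℝ) × ℝ =>
        ENNReal.ofReal (densQ (n + 1) Q (Fin.cons p.2 p.1))) :=
      ENNReal.measurable_ofReal.comp ((hcons_cont.comp continuous_swap).measurable)
    have e1 : ∫ y : Fin n → ℝ, densQ (n + 1) Q (Fin.cons t y) =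
        (∫⁻ y : Fin n → ℝ, ENNReal.ofReal (densQ (n + 1) Q (Fin.cons t y))).toReal :=
      integral_eq_lintegral_of_nonneg_ae (ae_of_all _ fun y => densQ_nonneg _ _ _) hmeas1
    have hg : Measurable (fun x : Fin (n + 1) → ℝ => ENNReal.ofReal (densQ (n + 1) Q x)) :=
      ENNReal.measurable_ofReal.comp (densQ_continuous (n + 1) Q hQcont).measurable
    have hmp_eq : ∫⁻ p : ℝ × (Fin n → ℝ),
          ENNReal.ofReal (densQ (n + 1) Q (Fin.cons p.1 p.2)) ∂(volume.prod volume) =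
        ∫⁻ x : Fin (n + 1) → ℝ, ENNReal.ofReal (densQ (n + 1) Q x) := by
      have hmp := (measurePreserving_piFinSuccAbove
        (fun _ : Fin (n + 1) => (volume : Measure ℝ)) 0).symm
      have h := hmp.lintegral_comp hg
      simp only [MeasurableEquiv.piFinSuccAbove_symm_apply, Fin.insertNthEquiv_zero,
        Fin.consEquiv_apply, Fin.insertNth_zero'] at h
      rw [← volume_pi] at h
      exact h
    have chain : (∫⁻ y : Fin n → ℝ, ENNReal.ofReal (densQ (n + 1) Q (Fin.cons t y))) ≤
        ENNReal.ofReal (A * ∫ x : Fin (n + 1) → ℝ, densQ (n + 1) Q x) := by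
      calc (∫⁻ y : Fin n → ℝ, ENNReal.ofReal (densQ (n + 1) Q (Fin.cons t y)))
          ≤ ∫⁻ y : Fin n → ℝ, ENNReal.ofReal
              (A * ∫ s in Set.Icc (0:ℝ) 1, densQ (n + 1) Q (Fin.cons s y)) :=
            lintegral_mono fun y => ENNReal.ofReal_le_ofReal (hkey y)
        _ = ∫⁻ y : Fin n → ℝ, ENNReal.ofReal A *
              ENNReal.ofReal (∫ s in Set.Icc (0:ℝ) 1, densQ (n + 1) Q (Fin.cons s y)) := by
            refine lintegral_congr fun y => ?_
            rw [ENNReal.ofReal_mul hAnn]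
        _ = ENNReal.ofReal A * ∫⁻ y : Fin n → ℝ,
              ENNReal.ofReal (∫ s in Set.Icc (0:ℝ) 1, densQ (n + 1) Q (Fin.cons s y)) :=
            lintegral_const_mul' _ _ ENNReal.ofReal_ne_top
        _ = ENNReal.ofReal A * ∫⁻ y : Fin n → ℝ,
              ∫⁻ s in Set.Icc (0:ℝ) 1, ENNReal.ofReal (densQ (n + 1) Q (Fin.cons s y)) := by
            congr 1
            refine lintegral_congr fun y => ?_
            exact ofReal_integral_eq_lintegral_ofReal (hIccInt y)
              (ae_of_all _ fun s => densQ_nonneg _ _ _)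
        _ ≤ ENNReal.ofReal A * ∫⁻ y : Fin n → ℝ,
              ∫⁻ s : ℝ, ENNReal.ofReal (densQ (n + 1) Q (Fin.cons s y)) := by
            refine mul_le_mul_right (lintegral_mono fun y => ?_) _
            exact lintegral_mono' Measure.restrict_le_self le_rfl
        _ = ENNReal.ofReal A * ∫⁻ p : (Fin n → ℝ) × ℝ,
              ENNReal.ofReal (densQ (n + 1) Q (Fin.cons p.2 p.1)) ∂(volume.prod volume) := by
            congr 1
            exact (lintegral_prod _ hmeasp.aemeasurable).symm
        _ = ENNReal.ofReal A * ∫⁻ p : ℝ × (Fin n → ℝ),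
              ENNReal.ofReal (densQ (n + 1) Q (Fin.cons p.1 p.2)) ∂(volume.prod volume) := by
            congr 1
            exact lintegral_prod_swap
              (fun p : ℝ × (Fin n → ℝ) => ENNReal.ofReal (densQ (n + 1) Q (Fin.cons p.1 p.2)))
        _ = ENNReal.ofReal A * ∫⁻ x : Fin (n + 1) → ℝ,
              ENNReal.ofReal (densQ (n + 1) Q x) := by rw [hmp_eq]
        _ = ENNReal.ofReal A * ENNReal.ofReal (∫ x : Fin (n + 1) → ℝ, densQ (n + 1) Q x) := by
            rw [← ofReal_integral_eq_lintegral_ofReal hint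
              (ae_of_all _ fun x => densQ_nonneg _ _ _)]
        _ = ENNReal.ofReal (A * ∫ x : Fin (n + 1) → ℝ, densQ (n + 1) Q x) :=
            (ENNReal.ofReal_mul hAnn).symm
    have hfin := ENNReal.toReal_mono ENNReal.ofReal_ne_top chain
    rw [ENNReal.toReal_ofReal (mul_nonneg hAnn hZpos.le)] at hfin
    rw [e1]
    calc (∫⁻ y : Fin n → ℝ, ENNReal.ofReal (densQ (n + 1) Q (Fin.cons t y))).toReal
        ≤ A * ∫ x : Fin (n + 1) → ℝ, densQ (n + 1) Q x := hfin
      _ = Real.exp ((Real.log 2 + 33 + max B 0) * ((n : ℝ) + 1)) *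
            Real.exp (-((n : ℝ) + 1) * (Q t - Real.log (1 + t ^ 2))) *
            ∫ x : Fin (n + 1) → ℝ, densQ (n + 1) Q x := by rw [hAdef]
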